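/- If n is prime, then the number of orbits of n-cycles in S_n under conjugation by the rotation subgroup equals ((n-1)! + (n-1)²)/n; in particular n divides (n-1)! + (n-1)², which implies Wilson's theorem (n-1)! ≡ -1 (mod n). -/

import Mathlib

/-- The rotation `ρ = (1 2 ⋯ n)`, i.e. the permutation `i ↦ i + 1` of `ℤ/nℤ`. -/
def rho (n : ℕ) [NeZero n] : Equiv.Perm (ZMod n) := Equiv.addRight 1

/-- The (cyclic) degree of a permutation of `ℤ/nℤ`: the number of indices `i` (mod `n`)
with `ν(i) > ν(i+1)`, values compared via the natural order on `{0, …, n-1}`. -/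
def deg {n : ℕ} [NeZero n] (ν : Equiv.Perm (ZMod n)) : ℕ :=
  (Finset.univ.filter fun i : ZMod n => (ν (i + 1)).val < (ν i).val).card

/-- `ν` is an `n`-cycle: a single cycle moving all the points. -/
def IsNCycle {n : ℕ} [NeZero n] (ν : Equiv.Perm (ZMod n)) : Prop :=
  ν.IsCycle ∧ ν.support = Finset.univ

/-- The orbit of `ν` under conjugation by the rotation subgroup `⟨ρ⟩`. -/
def rotOrbit {n : ℕ} [NeZero n] (ν : Equiv.Perm (ZMod n)) : Set (Equiv.Perm (ZMod n)) :=
  {σ | ∃ j : ℤ, σ = (rho n) ^ j * ν * ((rho n) ^ j)⁻¹}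

/-- The number of orbits of the set of `n`-cycles under conjugation by `⟨ρ⟩`. -/
noncomputable def T (n : ℕ) [NeZero n] : ℕ :=
  Nat.card {S : Set (Equiv.Perm (ZMod n)) | ∃ ν, IsNCycle ν ∧ S = rotOrbit ν}

open Equiv Equiv.Perm MulAction

section Aux

lemma aux_mem_zpowers_of_commute {α : Type*} [Fintype α] [DecidableEq α]
    {g c : Perm α} (hc : c.IsCycle) (hsupp : c.support = Finset.univ)
    (h : Commute g c) : g ∈ Subgroup.zpowers c := by
  obtain ⟨hc', hmem⟩ := hc.commute_iff.1 h
  have : ofSubtype (subtypePerm g hc') = g := by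
    apply ofSubtype_subtypePerm
    intro x _
    rw [hsupp]; exact Finset.mem_univ x
  rwa [this] at hmem

lemma zpow_addRight {α : Type*} [AddGroup α] (a : α) (n : ℤ) :
    Equiv.addRight a ^ n = Equiv.addRight (n • a) := by
  induction n using Int.induction_on with
  | zero => ext x; simp
  | succ k ih =>
    rw [zpow_add_one, ih]; ext x; simp [add_zsmul, add_assoc]
    rw [← succ_nsmul', succ_nsmul]
  | pred k ih =>
    rw [zpow_sub_one, ih]; ext x
    simp [sub_zsmul, Perm.inv_def, sub_eq_add_neg, add_assoc]
    rw [add_zsmul, neg_one_zsmul, neg_zsmul, natCast_zsmul, ← neg_add_rev, ← neg_add_rev,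
      ← succ_nsmul', succ_nsmul]

variable {n : ℕ} [NeZero n]

lemma aux_isNCycle_addRight (hp : n.Prime) {c : ZMod n} (hc : c ≠ 0) :
    IsNCycle (Equiv.addRight c) := by
  haveI : Fact n.Prime := ⟨hp⟩
  have hmove : ∀ x : ZMod n, Equiv.addRight c x ≠ x := by
    intro x h
    simp only [Equiv.coe_addRight] at h
    exact hc (by linear_combination h)
  constructor
  · refine ⟨0, hmove 0, fun y _ => ?_⟩
    refine ⟨((y * c⁻¹).val : ℤ), ?_⟩
    simp only [zpow_addRight, Equiv.coe_addRight, zero_add, zsmul_eq_mul]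
    push_cast
    rw [ZMod.natCast_val, ZMod.cast_id]
    field_simp
  · exact Finset.eq_univ_iff_forall.2 fun x => Equiv.Perm.mem_support.2 (hmove x)

lemma aux_isNCycle_iff_cycleType (hp : n.Prime) (σ : Perm (ZMod n)) :
    IsNCycle σ ↔ σ.cycleType = {n} := by
  constructor
  · rintro ⟨h1, h2⟩
    rw [h1.cycleType, h2, Finset.card_univ, ZMod.card]
  · intro h
    have hc : σ.IsCycle := card_cycleType_eq_one.1 (by rw [h]; rfl)
    refine ⟨hc, Finset.eq_univ_of_card _ ?_⟩
    have h2 := sum_cycleType σ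
    rw [h] at h2
    simp only [Multiset.sum_singleton] at h2
    rw [ZMod.card]
    exact h2.symm

/-- The number of `n`-cycles is `(n-1)!`. -/
lemma aux_card_nCycles (hp : n.Prime) {ρ : Perm (ZMod n)} (hρ : IsNCycle ρ) :
    Nat.card {σ : Perm (ZMod n) // IsNCycle σ} = (n - 1).factorial := by
  classical
  have horb : orbit (ConjAct (Perm (ZMod n))) ρ = {σ | IsNCycle σ} := by
    ext σ
    rw [ConjAct.mem_orbit_conjAct, isConj_comm, isConj_iff_cycleType_eq,
      (aux_isNCycle_iff_cycleType hp ρ).1 hρ]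
    exact eq_comm.trans (aux_isNCycle_iff_cycleType hp σ).symm
  have e : stabilizer (ConjAct (Perm (ZMod n))) ρ ≃ Subgroup.zpowers ρ := by
    refine ⟨fun g => ⟨ConjAct.ofConjAct g.1, ?_⟩, fun k => ⟨ConjAct.toConjAct k.1, ?_⟩, ?_, ?_⟩
    · have h := g.2
      rw [mem_stabilizer_iff, ConjAct.smul_def] at h
      refine aux_mem_zpowers_of_commute hρ.1 hρ.2 ?_
      have := congrArg (· * ConjAct.ofConjAct g.1) h
      exact (by simpa [mul_assoc] using this : _ * ρ = ρ * _)
    · rcases k.2 with ⟨j, hj⟩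
      rw [mem_stabilizer_iff, ConjAct.smul_def, ConjAct.ofConjAct_toConjAct, ← hj]
      group
    · intro g; simp
    · intro k; simp
  have hstab : Fintype.card (stabilizer (ConjAct (Perm (ZMod n))) ρ) = n := by
    rw [Fintype.card_congr e, ← Nat.card_eq_fintype_card, Nat.card_zpowers,
      hρ.1.orderOf, hρ.2, Finset.card_univ, ZMod.card]
  have key := card_orbit_mul_card_stabilizer_eq_card_group (ConjAct (Perm (ZMod n))) ρ
  rw [hstab, ConjAct.card, Fintype.card_perm, ZMod.card] at key
  have hcard : Nat.card {σ : Perm (ZMod n) // IsNCycle σ}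
      = Fintype.card (orbit (ConjAct (Perm (ZMod n))) ρ) := by
    rw [← Nat.card_eq_fintype_card, horb]
    rfl
  rw [hcard]
  rw [← Nat.mul_factorial_pred hp.ne_zero, mul_comm] at key
  exact Nat.eq_of_mul_eq_mul_left hp.pos key

/-- The conjugation action of the rotation subgroup on the set of `n`-cycles. -/
instance rotAction (n : ℕ) [NeZero n] :
    MulAction (Subgroup.zpowers (rho n)) {ν : Perm (ZMod n) // IsNCycle ν} where
  smul g ν := ⟨g.1 * ν.1 * g.1⁻¹,
    ν.2.1.conj, by rw [Equiv.Perm.support_conj, ν.2.2, Finset.map_univ_equiv]⟩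
  one_smul ν := by ext : 1; simp [HSMul.hSMul]
  mul_smul g h ν := by
    ext : 1
    show (g.1 * h.1) * ν.1 * (g.1 * h.1)⁻¹ = g.1 * (h.1 * ν.1 * h.1⁻¹) * g.1⁻¹
    group

lemma aux_smul_def {n : ℕ} [NeZero n] (g : Subgroup.zpowers (rho n))
    (ν : {ν : Perm (ZMod n) // IsNCycle ν}) :
    (g • ν).1 = g.1 * ν.1 * g.1⁻¹ := rfl

end Aux

theorem stmt_15 (n : ℕ) [NeZero n] (hp : n.Prime) :
    n ∣ (n - 1).factorial + (n - 1) ^ 2 ∧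
      T n = ((n - 1).factorial + (n - 1) ^ 2) / n ∧
      (((n - 1).factorial : ZMod n) = -1) := by
  classical
  haveI : Fact n.Prime := ⟨hp⟩
  set G := Subgroup.zpowers (rho n) with hG
  set X := {ν : Perm (ZMod n) // IsNCycle ν} with hX
  have hrho : IsNCycle (rho n) := aux_isNCycle_addRight hp one_ne_zero
  -- rho ^ j = addRight j
  have hpow : ∀ j : ℤ, (rho n) ^ j = Equiv.addRight ((j : ZMod n)) := by
    intro j
    rw [rho, zpow_addRight]
    norm_num
  -- card G = n
  have hcardG : Fintype.card G = n := by
    rw [← Nat.card_eq_fintype_card, Nat.card_zpowers, hrho.1.orderOf, hrho.2,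
      Finset.card_univ, ZMod.card]
  -- Burnside
  have burnside := sum_card_fixedBy_eq_card_orbits_mul_card_group G X
  rw [hcardG] at burnside
  -- the fixed points of 1 : all of X
  have hfix1 : Fintype.card (fixedBy X (1 : G)) = (n - 1).factorial := by
    have : fixedBy X (1 : G) = Set.univ := by
      ext ν; simp [MulAction.fixedBy]
    rw [← Nat.card_eq_fintype_card, this, Nat.card_univ]
    exact aux_card_nCycles hp hrho
  -- the fixed points of g ≠ 1
  have hfixg : ∀ g : G, g ≠ 1 → Fintype.card (fixedBy X g) = n - 1 := by
    intro g hg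
    obtain ⟨j, hj⟩ := Subgroup.mem_zpowers_iff.1 g.2
    set c : ZMod n := (j : ZMod n) with hc
    have hgval : g.1 = Equiv.addRight c := by rw [← hj, hpow]
    have hcne : c ≠ 0 := by
      intro h0
      apply hg
      ext : 1
      rw [hgval, h0]
      ext x; simp
    -- the fixed points of g are exactly the addRight d, d ≠ 0
    have he : {d : ZMod n // d ≠ 0} ≃ fixedBy X g := by
      refine Equiv.ofBijective (fun d =>
        ⟨⟨Equiv.addRight d.1, aux_isNCycle_addRight hp d.2⟩, ?_⟩) ⟨?_, ?_⟩
      · show g • _ = _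
        ext : 1
        rw [aux_smul_def, hgval]
        ext x
        simp [mul_comm, add_assoc, add_comm, add_left_comm]
      · intro d d' h
        have h2 := congrArg (fun ν => ν.1.1.1 (0 : ZMod n)) h
        exact Subtype.ext (by simpa using h2)
      · rintro ⟨ν, hν⟩
        have hgNC : IsNCycle g.1 := by rw [hgval]; exact aux_isNCycle_addRight hp hcne
        have hcomm : Commute ν.1 g.1 := by
          have h' : g.1 * ν.1 * g.1⁻¹ = ν.1 := congrArg Subtype.val hν
          rw [Commute, SemiconjBy]
          calc ν.1 * g.1 = (g.1 * ν.1 * g.1⁻¹) * g.1 := by rw [h']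
          _ = g.1 * ν.1 := by group
        have hmem : ν.1 ∈ Subgroup.zpowers g.1 :=
          aux_mem_zpowers_of_commute hgNC.1 hgNC.2 hcomm
        obtain ⟨m, hm⟩ := Subgroup.mem_zpowers_iff.1 hmem
        rw [hgval, zpow_addRight] at hm
        refine ⟨⟨m • c, ?_⟩, ?_⟩
        · intro h0
          rw [h0] at hm
          apply ν.2.1.ne_one
          rw [← hm]
          ext x
          simp
        · exact Subtype.ext (Subtype.ext hm)
    rw [← Fintype.card_congr he]
    simp only [Ne]
    rw [Fintype.card_subtype_compl, ZMod.card, Fintype.card_subtype_eq]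
  -- total the Burnside sum
  have hsum : ∑ g : G, Fintype.card (fixedBy X g) = (n-1).factorial + (n-1) * (n-1) := by
    rw [← Finset.add_sum_erase Finset.univ _ (Finset.mem_univ (1 : G)), hfix1]
    congr 1
    rw [Finset.sum_congr rfl (fun g hg => hfixg g (Finset.ne_of_mem_erase hg)),
      Finset.sum_const, smul_eq_mul, Finset.card_erase_of_mem (Finset.mem_univ _),
      Finset.card_univ, hcardG]
  rw [hsum] at burnside
  -- identify T n with the number of orbits
  set F : X → Set (Perm (ZMod n)) := fun ν => rotOrbit ν.1 with hF
  have hconj : ∀ (j : ℤ) (ν : Perm (ZMod n)),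
      rotOrbit ((rho n)^j * ν * ((rho n)^j)⁻¹) = rotOrbit ν := by
    intro j ν
    ext σ
    constructor
    · rintro ⟨i, rfl⟩
      exact ⟨i + j, by rw [zpow_add]; group⟩
    · rintro ⟨i, rfl⟩
      exact ⟨i - j, by rw [sub_eq_add_neg, zpow_add]; group⟩
  have hker : Setoid.ker F = orbitRel G X := by
    apply Setoid.ext
    intro a b
    show F a = F b ↔ _
    rw [orbitRel_apply]
    constructor
    · intro h
      have ha : a.1 ∈ F a := ⟨0, by group⟩
      rw [h] at ha
      obtain ⟨j, hj⟩ := ha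
      refine ⟨⟨(rho n)^j, Subgroup.mem_zpowers_iff.2 ⟨j, rfl⟩⟩, ?_⟩
      exact Subtype.ext hj.symm
    · rintro ⟨g, rfl⟩
      obtain ⟨j, hj⟩ := Subgroup.mem_zpowers_iff.1 g.2
      show rotOrbit (g.1 * b.1 * g.1⁻¹) = rotOrbit b.1
      rw [← hj]
      exact hconj j b.1
  have hT : T n = Fintype.card (Quotient (orbitRel G X)) := by
    have hrange : {S : Set (Perm (ZMod n)) | ∃ ν, IsNCycle ν ∧ S = rotOrbit ν}
        = Set.range F := by
      ext S
      constructor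
      · rintro ⟨ν, hν, rfl⟩
        exact ⟨⟨ν, hν⟩, rfl⟩
      · rintro ⟨ν, rfl⟩
        exact ⟨ν.1, ν.2, rfl⟩
    rw [T, hrange, ← Nat.card_congr (Setoid.quotientKerEquivRange F), hker,
      Nat.card_eq_fintype_card]
  rw [← hT] at burnside
  -- conclude
  have key : (n-1).factorial + (n-1)^2 = T n * n := by rw [pow_two]; exact burnside
  refine ⟨⟨T n, by rw [key, mul_comm]⟩, ?_, ZMod.wilsons_lemma n⟩
  rw [key, Nat.mul_div_cancel _ hp.pos]
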